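/- For p < 0, the Jacobian matrix of the vector field (x - x²y + pxy² + y³, y + py³) at the singular point (1/√(-p), -1/√(-p)) has one positive and one negative real eigenvalue (the point is a hyperbolic saddle), equivalently its determinant is negative. -/

import Mathlib

open Polynomial in
theorem saddle_p_neg (p : ℝ) (hp : p < 0) :
    ∃ l₁ l₂ : ℝ, 0 < l₁ ∧ l₂ < 0 ∧
      (Matrix.charpoly
        (let a : ℝ := 1 / Real.sqrt (-p); let b : ℝ := -(1 / Real.sqrt (-p));
         !![deriv (fun x' : ℝ => x' - x' ^ 2 * b + p * x' * b ^ 2 + b ^ 3) a,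
            deriv (fun y' : ℝ => a - a ^ 2 * y' + p * a * y' ^ 2 + y' ^ 3) b;
            deriv (fun x' : ℝ => b + p * b ^ 3) a,
            deriv (fun y' : ℝ => y' + p * y' ^ 3) b]) =
        (X - C l₁) * (X - C l₂)) ∧
      Matrix.det
        (let a : ℝ := 1 / Real.sqrt (-p); let b : ℝ := -(1 / Real.sqrt (-p));
         !![deriv (fun x' : ℝ => x' - x' ^ 2 * b + p * x' * b ^ 2 + b ^ 3) a,
            deriv (fun y' : ℝ => a - a ^ 2 * y' + p * a * y' ^ 2 + y' ^ 3) b;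
            deriv (fun x' : ℝ => b + p * b ^ 3) a,
            deriv (fun y' : ℝ => y' + p * y' ^ 3) b]) < 0 := by
  set s : ℝ := Real.sqrt (-p) with hsdef
  have hs : 0 < s := Real.sqrt_pos.mpr (by linarith)
  have hs2 : s ^ 2 = -p := Real.sq_sqrt (by linarith)
  set a : ℝ := 1 / s with ha
  set b : ℝ := -(1 / s) with hb
  have d11 : deriv (fun x' : ℝ => x' - x' ^ 2 * b + p * x' * b ^ 2 + b ^ 3) a
      = 1 - 2 * a * b + p * b ^ 2 := by
    have h : HasDerivAt (fun x' : ℝ => x' - x' ^ 2 * b + p * x' * b ^ 2 + b ^ 3)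
        (1 - 2 * a * b + p * b ^ 2) a := by
      have h1 : HasDerivAt (fun x' : ℝ => x' ^ 2 * b) (2 * a * b) a := by
        simpa using (hasDerivAt_pow 2 a).mul_const b
      have h2 : HasDerivAt (fun x' : ℝ => p * x' * b ^ 2) (p * b ^ 2) a := by
        simpa using (((hasDerivAt_id a).const_mul p).mul_const (b ^ 2))
      simpa using (((hasDerivAt_id a).sub h1).add h2).add_const (b ^ 3)
    exact h.deriv
  have d12 : deriv (fun y' : ℝ => a - a ^ 2 * y' + p * a * y' ^ 2 + y' ^ 3) b
      = -(a ^ 2) + 2 * p * a * b + 3 * b ^ 2 := by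
    have h : HasDerivAt (fun y' : ℝ => a - a ^ 2 * y' + p * a * y' ^ 2 + y' ^ 3)
        (-(a ^ 2) + 2 * p * a * b + 3 * b ^ 2) b := by
      have h1 : HasDerivAt (fun y' : ℝ => a - a ^ 2 * y') (-(a ^ 2)) b := by
        simpa using ((hasDerivAt_id b).const_mul (a ^ 2)).const_sub a
      have h2 : HasDerivAt (fun y' : ℝ => p * a * y' ^ 2) (2 * p * a * b) b := by
        have := (hasDerivAt_pow 2 b).const_mul (p * a)
        simpa [mul_comm, mul_assoc, mul_left_comm] using this
      have h3 : HasDerivAt (fun y' : ℝ => y' ^ 3) (3 * b ^ 2) b := by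
        simpa using hasDerivAt_pow 3 b
      exact (h1.add h2).add h3
    exact h.deriv
  have d21 : deriv (fun _ : ℝ => b + p * b ^ 3) a = 0 := deriv_const _ _
  have d22 : deriv (fun y' : ℝ => y' + p * y' ^ 3) b = 1 + 3 * p * b ^ 2 := by
    have h : HasDerivAt (fun y' : ℝ => y' + p * y' ^ 3) (1 + 3 * p * b ^ 2) b := by
      have h3 : HasDerivAt (fun y' : ℝ => p * y' ^ 3) (3 * p * b ^ 2) b := by
        have := (hasDerivAt_pow 3 b).const_mul p
        simpa [mul_comm, mul_assoc, mul_left_comm] using this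
      exact (hasDerivAt_id b).add h3
    exact h.deriv
  have hs0 : s ≠ 0 := ne_of_gt hs
  have hb2 : b ^ 2 = 1 / s ^ 2 := by rw [hb]; ring
  have hpb2 : p * b ^ 2 = -1 := by
    rw [hb2]; field_simp; linarith [hs2]
  have e11 : 1 - 2 * a * b + p * b ^ 2 = 2 / s ^ 2 := by
    rw [hpb2, ha, hb]; field_simp; ring
  have e22 : 1 + 3 * p * b ^ 2 = -2 := by linear_combination 3 * hpb2
  refine ⟨2 / s ^ 2, -2, by positivity, by norm_num, ?_, ?_⟩
  · simp only [d11, d12, d21, d22, e11, e22]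
    rw [Matrix.charpoly, Matrix.det_fin_two]
    simp [Matrix.charmatrix_apply_eq, Matrix.charmatrix_apply_ne]
  · simp only [d11, d12, d21, d22, e11, e22, Matrix.det_fin_two_of]
    have : (0:ℝ) < 2 / s ^ 2 := by positivity
    nlinarith
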